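/- Let h : ℝ^d → [0,∞) be a density, a ∈ ℝ^d, W ⊂ ℝ^d a Borel set, n ∈ ℕ, and c₂₁ > 0, r > 0. Suppose that for λ^d-a.e. x ∈ W, ‖x−a‖ ≤ c₂₁ n^{−1/d} h(x)^{−1/(r+d)}. Let t̄ = ess sup_{W} h. Then P(W) = ∫_W h dλ^d ≤ λ^d(B(0,1)) · ((r+d)/r) · c₂₁^d · t̄^{r/(r+d)} · n^{−1}. -/

import Mathlib

open MeasureTheory Metric

/-- if `‖x−a‖ ≤ c₂₁ n^{−1/d} h(x)^{−1/(r+d)}` a.e. on `W` and `h ≤ t̄` a.e.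
on `W`, then `P(W) = ∫_W h dλ ≤ λ^d(B(0,1))·((r+d)/r)·c₂₁^d·t̄^{r/(r+d)}·n^{−1}`. -/
theorem stmt15 (d : ℕ) (hd : 0 < d) (r : ℝ) (hr : 0 < r) (c₂₁ : ℝ) (hc₂₁ : 0 < c₂₁)
    (n : ℕ) (hn : 1 ≤ n)
    (h : EuclideanSpace ℝ (Fin d) → ℝ) (hmeas : Measurable h) (hnn : ∀ x, 0 ≤ h x)
    (a : EuclideanSpace ℝ (Fin d)) (W : Set (EuclideanSpace ℝ (Fin d))) (hW : MeasurableSet W)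
    (tbar : ℝ) (htbar : ∀ᵐ x ∂volume.restrict W, h x ≤ tbar)
    (hdist : ∀ᵐ x ∂volume.restrict W, 0 < h x →
      ‖x - a‖ ≤ c₂₁ * (n : ℝ) ^ (-(1 / (d : ℝ))) * h x ^ (-(1 / (r + d)))) :
    ∫⁻ x in W, ENNReal.ofReal (h x) ∂volume ≤
      ENNReal.ofReal ((volume (ball (0 : EuclideanSpace ℝ (Fin d)) 1)).toReal *
        ((r + d) / r) * c₂₁ ^ (d : ℝ) * tbar ^ (r / (r + d)) * (n : ℝ)⁻¹) := by
  have hdpos : (0:ℝ) < d := by exact_mod_cast hd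
  have hnpos : (0:ℝ) < n := by exact_mod_cast hn
  have hrd : (0:ℝ) < r + d := by linarith
  rcases le_or_gt tbar 0 with htb | htb
  · -- degenerate case: h = 0 a.e. on W
    have hz : ∀ᵐ x ∂volume.restrict W, ENNReal.ofReal (h x) = 0 := by
      filter_upwards [htbar] with x hx
      exact ENNReal.ofReal_eq_zero.mpr (hx.trans htb)
    calc ∫⁻ x in W, ENNReal.ofReal (h x) ∂volume = ∫⁻ _ in W, 0 ∂volume :=
          lintegral_congr_ae hz
      _ = 0 := lintegral_zero
      _ ≤ _ := zero_le'
  -- main case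
  set V := volume (ball (0 : EuclideanSpace ℝ (Fin d)) 1) with hV
  have hVlt : V ≠ ⊤ := measure_ball_lt_top.ne
  set y : ℝ := -((d:ℝ) / (r + d)) with hy
  have hy1 : y + 1 = r / (r + d) := by rw [hy]; field_simp; ring
  have hym : (-1:ℝ) < y := by
    rw [hy, neg_lt, neg_neg]
    rw [div_lt_one hrd]; linarith
  set C : ℝ := c₂₁ ^ (d:ℝ) * (n:ℝ)⁻¹ with hC
  have hCpos : 0 < C := by positivity
  -- layer cake
  rw [lintegral_eq_lintegral_meas_lt (volume.restrict W) (ae_of_all _ hnn) hmeas.aemeasurable]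
  -- pointwise bound on the level-set measures
  have hbound : ∀ t ∈ Set.Ioi (0:ℝ), (volume.restrict W) {x | t < h x} ≤
      Set.indicator (Set.Ioc 0 tbar) (fun t => ENNReal.ofReal (C * t ^ y) * V) t := by
    intro t ht
    simp only [Set.mem_Ioi] at ht
    by_cases htt : t ≤ tbar
    · rw [Set.indicator_of_mem (by exact ⟨ht, htt⟩)]
      set R : ℝ := c₂₁ * (n : ℝ) ^ (-(1 / (d : ℝ))) * t ^ (-(1 / (r + d))) with hR
      have hRnn : 0 ≤ R := by positivity
      have hsub : {x | t < h x} ≤ᵐ[volume.restrict W] closedBall a R := by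
        filter_upwards [hdist] with x hx hxt
        have hhx : 0 < h x := ht.trans hxt
        have h1 : h x ^ (-(1 / (r + d))) ≤ t ^ (-(1 / (r + d))) :=
          Real.rpow_le_rpow_of_nonpos ht hxt.le (neg_nonpos.mpr (by positivity))
        have h2 : ‖x - a‖ ≤ R := by
          calc ‖x - a‖ ≤ c₂₁ * (n : ℝ) ^ (-(1 / (d : ℝ))) * h x ^ (-(1 / (r + d))) := hx hhx
            _ ≤ R := by
                rw [hR]
                apply mul_le_mul_of_nonneg_left h1 (by positivity)
        exact (show x ∈ closedBall a R by simpa [Metric.mem_closedBall, dist_eq_norm] using h2)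
      calc (volume.restrict W) {x | t < h x} ≤ (volume.restrict W) (closedBall a R) :=
            measure_mono_ae hsub
        _ ≤ volume (closedBall a R) := by
              rw [Measure.restrict_apply measurableSet_closedBall]
              exact measure_mono Set.inter_subset_left
        _ = ENNReal.ofReal (R ^ (Module.finrank ℝ (EuclideanSpace ℝ (Fin d)))) * V := by
            rw [Measure.addHaar_closedBall _ _ hRnn]
        _ = ENNReal.ofReal (C * t ^ y) * V := by
            congr 1
            rw [finrank_euclideanSpace_fin]
            congr 1
            rw [← Real.rpow_natCast R d, hR]
            rw [Real.mul_rpow (by positivity) (by positivity),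
              Real.mul_rpow (by positivity) (by positivity),
              ← Real.rpow_mul (le_of_lt hnpos), ← Real.rpow_mul ht.le]
            have e1 : -(1 / (d:ℝ)) * d = -1 := by field_simp
            have e2 : -(1 / (r + d)) * (d:ℝ) = y := by rw [hy]; field_simp
            rw [e1, e2, Real.rpow_neg_one, hC]
    · rw [Set.indicator_of_notMem (by simp [Set.mem_Ioc, htt])]
      have : (volume.restrict W) {x | t < h x} = 0 := by
        rw [← le_zero_iff]
        calc (volume.restrict W) {x | t < h x} ≤ (volume.restrict W) {x | tbar < h x} :=
              measure_mono (fun x hx => lt_of_le_of_lt (le_of_not_ge htt) hx)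
          _ = 0 := by
              apply measure_eq_zero_iff_ae_notMem.mpr
              filter_upwards [htbar] with x hx
              simpa using hx
      exact this.le
  refine le_trans (setLIntegral_mono' measurableSet_Ioi hbound) ?_
  -- compute the integral of the bound
  rw [lintegral_indicator measurableSet_Ioc, Measure.restrict_restrict measurableSet_Ioc,
    Set.inter_eq_left.mpr (Set.Ioc_subset_Ioi_self), lintegral_mul_const _ (by fun_prop)]
  have hint : IntegrableOn (fun t : ℝ => C * t ^ y) (Set.Ioc 0 tbar) volume := by
    have := (intervalIntegral.intervalIntegrable_rpow' (a := 0) (b := tbar) hym).1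
    simpa [IntegrableOn, Set.uIoc_of_le htb.le] using this.const_mul C
  have hval : ∫ t in Set.Ioc 0 tbar, C * t ^ y = C * (tbar ^ (r / (r + d)) * ((r + d) / r)) := by
    rw [← intervalIntegral.integral_of_le htb.le, intervalIntegral.integral_const_mul,
      integral_rpow (Or.inl hym), Real.zero_rpow (by rw [hy1]; positivity), hy1]
    field_simp; ring
  have hnn' : 0 ≤ᵐ[volume.restrict (Set.Ioc 0 tbar)] fun t : ℝ => C * t ^ y := by
    filter_upwards [ae_restrict_mem measurableSet_Ioc] with t ht
    exact mul_nonneg hCpos.le (Real.rpow_nonneg ht.1.le y)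
  rw [← ofReal_integral_eq_lintegral_ofReal hint hnn', hval]
  -- final algebraic comparison
  have hrw : (volume (ball (0 : EuclideanSpace ℝ (Fin d)) 1)).toReal *
        ((r + d) / r) * c₂₁ ^ (d : ℝ) * tbar ^ (r / (r + d)) * (n : ℝ)⁻¹
      = V.toReal * (C * (tbar ^ (r / (r + d)) * ((r + d) / r))) := by
    rw [hC, ← hV]; ring
  rw [hrw, ENNReal.ofReal_mul ENNReal.toReal_nonneg, ENNReal.ofReal_toReal hVlt, mul_comm]
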